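/- The principal congruence subgroup Γ(2) of level 2 is contained in the subgroup Γ of Sp(4,ℤ) generated by the four matrices A, B, C, D. -/

import Mathlib

open Matrix

namespace GenusTwo

def A : Matrix (Fin 4) (Fin 4) ℤ := !![1,0,0,0; 0,1,0,0; 1,0,1,0; 0,0,0,1]
def B : Matrix (Fin 4) (Fin 4) ℤ := !![1,0,-1,1; 0,1,1,-1; 0,0,1,0; 0,0,0,1]
def C : Matrix (Fin 4) (Fin 4) ℤ := !![1,0,0,0; 0,1,0,0; 0,0,1,0; 0,1,0,1]
def D : Matrix (Fin 4) (Fin 4) ℤ := !![1,0,0,0; 0,1,0,-1; 0,0,1,0; 0,0,0,1]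
def E : Matrix (Fin 4) (Fin 4) ℤ := !![1,0,0,0; 0,1,0,0; 1,1,1,0; 1,1,0,1]

def r (M : Matrix (Fin 4) (Fin 4) ℤ) : Matrix (Fin 2 ⊕ Fin 2) (Fin 2 ⊕ Fin 2) ℤ :=
  Matrix.reindex finSumFinEquiv.symm finSumFinEquiv.symm M

def Γ : Subgroup (Matrix.symplecticGroup (Fin 2) ℤ) :=
  Subgroup.closure {g | (g : Matrix (Fin 2 ⊕ Fin 2) (Fin 2 ⊕ Fin 2) ℤ) = r A ∨
    (g : Matrix (Fin 2 ⊕ Fin 2) (Fin 2 ⊕ Fin 2) ℤ) = r B ∨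
    (g : Matrix (Fin 2 ⊕ Fin 2) (Fin 2 ⊕ Fin 2) ℤ) = r C ∨
    (g : Matrix (Fin 2 ⊕ Fin 2) (Fin 2 ⊕ Fin 2) ℤ) = r D}

-- ==================== infrastructure ====================

abbrev M4 := Matrix (Fin 4) (Fin 4) ℤ

def J4 : M4 := !![0,0,-1,0; 0,0,0,-1; 1,0,0,0; 0,1,0,0]

/-- inverse reindexing -/
def s (X : Matrix (Fin 2 ⊕ Fin 2) (Fin 2 ⊕ Fin 2) ℤ) : M4 :=
  X.submatrix (finSumFinEquiv (m := 2) (n := 2)).symm (finSumFinEquiv (m := 2) (n := 2)).symm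

lemma r_apply (m : M4) : r m = m.submatrix finSumFinEquiv finSumFinEquiv := rfl

lemma r_mul (X Y : M4) : r (X * Y) = r X * r Y := by
  simp [r_apply, Matrix.submatrix_mul_equiv]

lemma r_one : r (1 : M4) = 1 := by
  simp [r_apply, Matrix.submatrix_one_equiv]

lemma r_transpose (m : M4) : r mᵀ = (r m)ᵀ := by
  simp [r_apply, Matrix.transpose_submatrix]

lemma r_inj : Function.Injective r := (Matrix.reindex _ _).injective

lemma r_s (X : Matrix (Fin 2 ⊕ Fin 2) (Fin 2 ⊕ Fin 2) ℤ) : r (s X) = X := by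
  simp [r_apply, s, Matrix.submatrix_submatrix]

lemma s_r (m : M4) : s (r m) = m := by
  simp [r_apply, s, Matrix.submatrix_submatrix]

lemma s_mul (X Y : Matrix (Fin 2 ⊕ Fin 2) (Fin 2 ⊕ Fin 2) ℤ) : s (X * Y) = s X * s Y := by
  apply r_inj
  rw [r_mul, r_s, r_s, r_s]

lemma rJ : r J4 = Matrix.J (Fin 2) ℤ := by decide

lemma mem_spG_of_eq {m : M4} (h : m * J4 * mᵀ = J4) :
    r m ∈ Matrix.symplecticGroup (Fin 2) ℤ := by
  rw [SymplecticGroup.mem_iff, ← r_transpose, ← rJ, ← r_mul, ← r_mul, h]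

lemma colrel_of_mem_spG {m : M4} (h : r m ∈ Matrix.symplecticGroup (Fin 2) ℤ) :
    mᵀ * J4 * m = J4 := by
  have h' := SymplecticGroup.mem_iff'.mp h
  apply r_inj
  rw [r_mul, r_mul, r_transpose, rJ, h']

/-- membership in Γ seen at the Fin-4 matrix level -/
def InG (m : M4) : Prop :=
  ∃ γ : Matrix.symplecticGroup (Fin 2) ℤ, γ ∈ Γ ∧ (γ : Matrix (Fin 2 ⊕ Fin 2) (Fin 2 ⊕ Fin 2) ℤ) = r m

lemma InG.spG {m : M4} (h : InG m) : r m ∈ Matrix.symplecticGroup (Fin 2) ℤ := by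
  obtain ⟨γ, _, hγ⟩ := h
  rw [← hγ]; exact γ.2

lemma InG_one : InG 1 := ⟨1, Subgroup.one_mem _, by simp [r_one]⟩

lemma InG.mul {m n : M4} (hm : InG m) (hn : InG n) : InG (m * n) := by
  obtain ⟨γ, hγΓ, hγ⟩ := hm
  obtain ⟨δ, hδΓ, hδ⟩ := hn
  exact ⟨γ * δ, mul_mem hγΓ hδΓ, by rw [r_mul, ← hγ, ← hδ]; rfl⟩

lemma coe_inv_mul (γ : Matrix.symplecticGroup (Fin 2) ℤ) :
    (((γ⁻¹ : Matrix.symplecticGroup (Fin 2) ℤ)) : Matrix (Fin 2 ⊕ Fin 2) (Fin 2 ⊕ Fin 2) ℤ) *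
      (γ : Matrix (Fin 2 ⊕ Fin 2) (Fin 2 ⊕ Fin 2) ℤ) = 1 := by
  have := congrArg (Subtype.val) (inv_mul_cancel γ)
  exact this

lemma coe_mul_inv (γ : Matrix.symplecticGroup (Fin 2) ℤ) :
    (γ : Matrix (Fin 2 ⊕ Fin 2) (Fin 2 ⊕ Fin 2) ℤ) *
      (((γ⁻¹ : Matrix.symplecticGroup (Fin 2) ℤ)) : Matrix (Fin 2 ⊕ Fin 2) (Fin 2 ⊕ Fin 2) ℤ) = 1 := by
  have := congrArg (Subtype.val) (mul_inv_cancel γ)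
  exact this

lemma InG.inv_pair {m n : M4} (hm : InG m) (h : m * n = 1) : InG n := by
  obtain ⟨γ, hγΓ, hγ⟩ := hm
  refine ⟨γ⁻¹, inv_mem hγΓ, ?_⟩
  set δ : Matrix (Fin 2 ⊕ Fin 2) (Fin 2 ⊕ Fin 2) ℤ :=
    ((γ⁻¹ : Matrix.symplecticGroup (Fin 2) ℤ) : Matrix (Fin 2 ⊕ Fin 2) (Fin 2 ⊕ Fin 2) ℤ) with hδ
  show δ = r n
  calc δ = δ * (r m * r n) := by rw [← r_mul, h, r_one, mul_one]
    _ = (δ * (γ : Matrix (Fin 2 ⊕ Fin 2) (Fin 2 ⊕ Fin 2) ℤ)) * r n := by rw [hγ, mul_assoc]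
    _ = r n := by rw [hδ, coe_inv_mul, one_mul]

lemma InG.two_sided {m : M4} (hm : InG m) : ∃ mi, InG mi ∧ mi * m = 1 ∧ m * mi = 1 := by
  obtain ⟨γ, hγΓ, hγ⟩ := hm
  set δ : Matrix (Fin 2 ⊕ Fin 2) (Fin 2 ⊕ Fin 2) ℤ :=
    ((γ⁻¹ : Matrix.symplecticGroup (Fin 2) ℤ) : Matrix (Fin 2 ⊕ Fin 2) (Fin 2 ⊕ Fin 2) ℤ) with hδ
  refine ⟨s δ, ⟨γ⁻¹, inv_mem hγΓ, (r_s _).symm⟩, ?_, ?_⟩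
  · apply r_inj
    rw [r_mul, r_s, r_one, ← hγ, hδ, coe_inv_mul]
  · apply r_inj
    rw [r_mul, r_s, r_one, ← hγ, hδ, coe_mul_inv]

lemma InG_A : InG A :=
  ⟨⟨r A, mem_spG_of_eq (by decide)⟩, Subgroup.subset_closure (Or.inl rfl), rfl⟩
lemma InG_B : InG B :=
  ⟨⟨r B, mem_spG_of_eq (by decide)⟩, Subgroup.subset_closure (Or.inr (Or.inl rfl)), rfl⟩
lemma InG_C : InG C :=
  ⟨⟨r C, mem_spG_of_eq (by decide)⟩, Subgroup.subset_closure (Or.inr (Or.inr (Or.inl rfl))), rfl⟩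
lemma InG_D : InG D :=
  ⟨⟨r D, mem_spG_of_eq (by decide)⟩, Subgroup.subset_closure (Or.inr (Or.inr (Or.inr rfl))), rfl⟩

def Ai : M4 := !![1,0,0,0; 0,1,0,0; -1,0,1,0; 0,0,0,1]
def Bi : M4 := !![1,0,1,-1; 0,1,-1,1; 0,0,1,0; 0,0,0,1]
def Ci : M4 := !![1,0,0,0; 0,1,0,0; 0,0,1,0; 0,-1,0,1]
def Di : M4 := !![1,0,0,0; 0,1,0,1; 0,0,1,0; 0,0,0,1]

lemma InG_Ai : InG Ai := InG_A.inv_pair (by decide)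
lemma InG_Bi : InG Bi := InG_B.inv_pair (by decide)
lemma InG_Ci : InG Ci := InG_C.inv_pair (by decide)
lemma InG_Di : InG Di := InG_D.inv_pair (by decide)


-- ==================== power families ====================

lemma int_family {P : M4 → Prop} (f : ℤ → M4)
    (h0 : P (f 0))
    (hsucc : ∀ k : ℤ, P (f k) → P (f (k + 1)))
    (hpred : ∀ k : ℤ, P (f k) → P (f (k - 1))) : ∀ k : ℤ, P (f k) := by
  intro k
  induction k using Int.induction_on with
  | zero => exact h0
  | succ n ih => exact_mod_cast hsucc n ih
  | pred n ih => exact_mod_cast hpred (-n) ih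

def Ak (k : ℤ) : M4 := !![1,0,0,0; 0,1,0,0; k,0,1,0; 0,0,0,1]
def Ck (k : ℤ) : M4 := !![1,0,0,0; 0,1,0,0; 0,0,1,0; 0,k,0,1]
def Dk (k : ℤ) : M4 := !![1,0,0,0; 0,1,0,k; 0,0,1,0; 0,0,0,1]
def Pk (k : ℤ) : M4 := !![1,0,2*k,0; 0,1,0,0; 0,0,1,0; 0,0,0,1]
def Qk (k : ℤ) : M4 := !![1,0,0,0; 0,1,0,0; 0,2*k,1,0; 2*k,0,0,1]
def Rk (k : ℤ) : M4 := !![1,0,0,2*k; 0,1,2*k,0; 0,0,1,0; 0,0,0,1]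
def Tk (k : ℤ) : M4 := !![1,2*k,0,0; 0,1,0,0; 0,0,1,0; 0,0,-2*k,1]
def Lk (k : ℤ) : M4 := !![1,0,0,0; 2*k,1,0,0; 0,0,1,-2*k; 0,0,0,1]

-- base matrices for the level-2 families, as explicit words in A,B,C,D
lemma InG_P1 : InG (Pk 1) := by
  have h : B*B*C*B*B*C*Di*Ci*Bi*Bi*Ci*Di = Pk 1 := by decide
  rw [← h]
  exact ((((((((((InG_B.mul InG_B).mul InG_C).mul InG_B).mul InG_B).mul InG_C).mul
    InG_Di).mul InG_Ci).mul InG_Bi).mul InG_Bi).mul InG_Ci).mul InG_Di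
lemma InG_Pm1 : InG (Pk (-1)) := InG_P1.inv_pair (by decide)

lemma InG_Q1 : InG (Qk 1) := by
  have h : B*A*C*B*B*A*C*B = Qk 1 := by decide
  rw [← h]
  exact ((((((InG_B.mul InG_A).mul InG_C).mul InG_B).mul InG_B).mul InG_A).mul InG_C).mul InG_B
lemma InG_Qm1 : InG (Qk (-1)) := InG_Q1.inv_pair (by decide)

lemma InG_R1 : InG (Rk 1) := by
  have h : Ci*B*Di*C*C*B*Di*Ci = Rk 1 := by decide
  rw [← h]
  exact ((((((InG_Ci.mul InG_B).mul InG_Di).mul InG_C).mul InG_C).mul InG_B).mul InG_Di).mul InG_Ci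
lemma InG_Rm1 : InG (Rk (-1)) := InG_R1.inv_pair (by decide)

lemma InG_T1 : InG (Tk 1) := by
  have h : D*C*C*D*Bi*Ci*Ci*Bi = Tk 1 := by decide
  rw [← h]
  exact ((((((InG_D.mul InG_C).mul InG_C).mul InG_D).mul InG_Bi).mul InG_Ci).mul InG_Ci).mul InG_Bi
lemma InG_Tm1 : InG (Tk (-1)) := InG_T1.inv_pair (by decide)

lemma InG_L1 : InG (Lk 1) := by
  have h : B*A*C*B*D*C*C*B*D*C*Ai*Bi = Lk 1 := by decide
  rw [← h]
  exact ((((((((((InG_B.mul InG_A).mul InG_C).mul InG_B).mul InG_D).mul InG_C).mul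
    InG_C).mul InG_B).mul InG_D).mul InG_C).mul InG_Ai).mul InG_Bi
lemma InG_Lm1 : InG (Lk (-1)) := InG_L1.inv_pair (by decide)

section families
set_option maxHeartbeats 1000000

lemma InG_Ak (k : ℤ) : InG (Ak k) := by
  refine int_family Ak (by rw [show Ak 0 = 1 by decide]; exact InG_one) ?_ ?_ k <;> intro k h
  · have : Ak k * A = Ak (k+1) := by
      ext i j; fin_cases i <;> fin_cases j <;> simp [Ak, A, Matrix.mul_apply, Fin.sum_univ_four, Matrix.vecHead, Matrix.vecTail]
    rw [← this]; exact h.mul InG_A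
  · have : Ak k * Ai = Ak (k-1) := by
      ext i j; fin_cases i <;> fin_cases j <;>
        simp [Ak, Ai, Matrix.mul_apply, Fin.sum_univ_four, Matrix.vecHead, Matrix.vecTail] <;> ring
    rw [← this]; exact h.mul InG_Ai

lemma InG_Ck (k : ℤ) : InG (Ck k) := by
  refine int_family Ck (by rw [show Ck 0 = 1 by decide]; exact InG_one) ?_ ?_ k <;> intro k h
  · have : Ck k * C = Ck (k+1) := by
      ext i j; fin_cases i <;> fin_cases j <;> simp [Ck, C, Matrix.mul_apply, Fin.sum_univ_four, Matrix.vecHead, Matrix.vecTail]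
    rw [← this]; exact h.mul InG_C
  · have : Ck k * Ci = Ck (k-1) := by
      ext i j; fin_cases i <;> fin_cases j <;>
        simp [Ck, Ci, Matrix.mul_apply, Fin.sum_univ_four, Matrix.vecHead, Matrix.vecTail] <;> ring
    rw [← this]; exact h.mul InG_Ci

lemma InG_Dk (k : ℤ) : InG (Dk k) := by
  refine int_family Dk (by rw [show Dk 0 = 1 by decide]; exact InG_one) ?_ ?_ k <;> intro k h
  · have : Dk k * Di = Dk (k+1) := by
      ext i j; fin_cases i <;> fin_cases j <;>
        simp [Dk, Di, Matrix.mul_apply, Fin.sum_univ_four, Matrix.vecHead, Matrix.vecTail] <;> ring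
    rw [← this]; exact h.mul InG_Di
  · have : Dk k * D = Dk (k-1) := by
      ext i j; fin_cases i <;> fin_cases j <;>
        simp [Dk, D, Matrix.mul_apply, Fin.sum_univ_four, Matrix.vecHead, Matrix.vecTail] <;> ring
    rw [← this]; exact h.mul InG_D

lemma InG_Pk (k : ℤ) : InG (Pk k) := by
  refine int_family Pk ?_ ?_ ?_ k
  · have : Pk 0 = 1 := by decide
    rw [this]; exact InG_one
  all_goals intro k h
  · have : Pk k * Pk 1 = Pk (k+1) := by
      ext i j; fin_cases i <;> fin_cases j <;>
        simp [Pk, Matrix.mul_apply, Fin.sum_univ_four, Matrix.vecHead, Matrix.vecTail] <;> ring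
    rw [← this]; exact h.mul InG_P1
  · have : Pk k * Pk (-1) = Pk (k-1) := by
      ext i j; fin_cases i <;> fin_cases j <;>
        simp [Pk, Matrix.mul_apply, Fin.sum_univ_four, Matrix.vecHead, Matrix.vecTail] <;> ring
    rw [← this]; exact h.mul InG_Pm1

lemma InG_Qk (k : ℤ) : InG (Qk k) := by
  refine int_family Qk ?_ ?_ ?_ k
  · have : Qk 0 = 1 := by decide
    rw [this]; exact InG_one
  all_goals intro k h
  · have : Qk k * Qk 1 = Qk (k+1) := by
      ext i j; fin_cases i <;> fin_cases j <;>
        simp [Qk, Matrix.mul_apply, Fin.sum_univ_four, Matrix.vecHead, Matrix.vecTail] <;> ring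
    rw [← this]; exact h.mul InG_Q1
  · have : Qk k * Qk (-1) = Qk (k-1) := by
      ext i j; fin_cases i <;> fin_cases j <;>
        simp [Qk, Matrix.mul_apply, Fin.sum_univ_four, Matrix.vecHead, Matrix.vecTail] <;> ring
    rw [← this]; exact h.mul InG_Qm1

lemma InG_Rk (k : ℤ) : InG (Rk k) := by
  refine int_family Rk ?_ ?_ ?_ k
  · have : Rk 0 = 1 := by decide
    rw [this]; exact InG_one
  all_goals intro k h
  · have : Rk k * Rk 1 = Rk (k+1) := by
      ext i j; fin_cases i <;> fin_cases j <;>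
        simp [Rk, Matrix.mul_apply, Fin.sum_univ_four, Matrix.vecHead, Matrix.vecTail] <;> ring
    rw [← this]; exact h.mul InG_R1
  · have : Rk k * Rk (-1) = Rk (k-1) := by
      ext i j; fin_cases i <;> fin_cases j <;>
        simp [Rk, Matrix.mul_apply, Fin.sum_univ_four, Matrix.vecHead, Matrix.vecTail] <;> ring
    rw [← this]; exact h.mul InG_Rm1

lemma InG_Tk (k : ℤ) : InG (Tk k) := by
  refine int_family Tk ?_ ?_ ?_ k
  · have : Tk 0 = 1 := by decide
    rw [this]; exact InG_one
  all_goals intro k h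
  · have : Tk k * Tk 1 = Tk (k+1) := by
      ext i j; fin_cases i <;> fin_cases j <;>
        simp [Tk, Matrix.mul_apply, Fin.sum_univ_four, Matrix.vecHead, Matrix.vecTail] <;> ring
    rw [← this]; exact h.mul InG_T1
  · have : Tk k * Tk (-1) = Tk (k-1) := by
      ext i j; fin_cases i <;> fin_cases j <;>
        simp [Tk, Matrix.mul_apply, Fin.sum_univ_four, Matrix.vecHead, Matrix.vecTail] <;> ring
    rw [← this]; exact h.mul InG_Tm1

lemma InG_Lk (k : ℤ) : InG (Lk k) := by
  refine int_family Lk ?_ ?_ ?_ k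
  · have : Lk 0 = 1 := by decide
    rw [this]; exact InG_one
  all_goals intro k h
  · have : Lk k * Lk 1 = Lk (k+1) := by
      ext i j; fin_cases i <;> fin_cases j <;>
        simp [Lk, Matrix.mul_apply, Fin.sum_univ_four, Matrix.vecHead, Matrix.vecTail] <;> ring
    rw [← this]; exact h.mul InG_L1
  · have : Lk k * Lk (-1) = Lk (k-1) := by
      ext i j; fin_cases i <;> fin_cases j <;>
        simp [Lk, Matrix.mul_apply, Fin.sum_univ_four, Matrix.vecHead, Matrix.vecTail] <;> ring
    rw [← this]; exact h.mul InG_Lm1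

end families

-- Wneg : maps -e1 to e1
def Wneg : M4 := !![-1,0,-2,0; 0,-1,0,0; 0,0,-1,0; 0,0,0,-1]
lemma InG_Wneg : InG Wneg := by
  have h : A*B*C*D*D*C*B*A = Wneg := by decide
  rw [← h]
  exact ((((((InG_A.mul InG_B).mul InG_C).mul InG_D).mul InG_D).mul InG_C).mul InG_B).mul InG_A

-- ==================== action lemmas ====================

section actions
set_option maxHeartbeats 1000000

lemma Ak_mulVec (k a b c d : ℤ) : (Ak k).mulVec ![a,b,c,d] = ![a, b, c + k*a, d] := by
  funext i
  fin_cases i <;>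
    simp [Ak, Matrix.mulVec, dotProduct, Fin.sum_univ_four, Matrix.vecHead, Matrix.vecTail] <;> ring

lemma Ck_mulVec (k a b c d : ℤ) : (Ck k).mulVec ![a,b,c,d] = ![a, b, c, d + k*b] := by
  funext i
  fin_cases i <;>
    simp [Ck, Matrix.mulVec, dotProduct, Fin.sum_univ_four, Matrix.vecHead, Matrix.vecTail] <;> ring

lemma Dk_mulVec (k a b c d : ℤ) : (Dk k).mulVec ![a,b,c,d] = ![a, b + k*d, c, d] := by
  funext i
  fin_cases i <;>
    simp [Dk, Matrix.mulVec, dotProduct, Fin.sum_univ_four, Matrix.vecHead, Matrix.vecTail] <;> ring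

lemma Pk_mulVec (k a b c d : ℤ) : (Pk k).mulVec ![a,b,c,d] = ![a + 2*k*c, b, c, d] := by
  funext i
  fin_cases i <;>
    simp [Pk, Matrix.mulVec, dotProduct, Fin.sum_univ_four, Matrix.vecHead, Matrix.vecTail] <;> ring

lemma Rk_mulVec (k a b c d : ℤ) : (Rk k).mulVec ![a,b,c,d] = ![a + 2*k*d, b + 2*k*c, c, d] := by
  funext i
  fin_cases i <;>
    simp [Rk, Matrix.mulVec, dotProduct, Fin.sum_univ_four, Matrix.vecHead, Matrix.vecTail] <;> ring

lemma Tk_mulVec (k a b c d : ℤ) : (Tk k).mulVec ![a,b,c,d] = ![a + 2*k*b, b, c, d - 2*k*c] := by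
  funext i
  fin_cases i <;>
    simp [Tk, Matrix.mulVec, dotProduct, Fin.sum_univ_four, Matrix.vecHead, Matrix.vecTail] <;> ring

lemma Lk_mulVec (k a b c d : ℤ) : (Lk k).mulVec ![a,b,c,d] = ![a, b + 2*k*a, c - 2*k*d, d] := by
  funext i
  fin_cases i <;>
    simp [Lk, Matrix.mulVec, dotProduct, Fin.sum_univ_four, Matrix.vecHead, Matrix.vecTail] <;> ring

lemma B_mulVec (a b c d : ℤ) : B.mulVec ![a,b,c,d] = ![a - c + d, b + c - d, c, d] := by
  funext i
  fin_cases i <;>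
    simp [B, Matrix.mulVec, dotProduct, Fin.sum_univ_four, Matrix.vecHead, Matrix.vecTail] <;> ring

lemma Wneg_mulVec : Wneg.mulVec ![(-1 : ℤ),0,0,0] = ![1,0,0,0] := by
  funext i
  fin_cases i <;>
    simp [Wneg, Matrix.mulVec, dotProduct, Fin.sum_univ_four, Matrix.vecHead, Matrix.vecTail]

lemma vec4_eta (v : Fin 4 → ℤ) : v = ![v 0, v 1, v 2, v 3] := by
  funext i
  fin_cases i <;> rfl

lemma mulVec4_apply (X : M4) (x y z t : ℤ) (i : Fin 4) :
    X.mulVec ![x,y,z,t] i = X i 0 * x + X i 1 * y + X i 2 * z + X i 3 * t := by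
  simp [Matrix.mulVec, dotProduct, Fin.sum_univ_four, Matrix.vecHead, Matrix.vecTail]

-- ==================== SL2 embedding ====================

abbrev M2 := Matrix (Fin 2) (Fin 2) ℤ

def emb2 (V : M2) : M4 := !![1, 0, 0, 0; 0, V 0 0, 0, V 0 1; 0, 0, 1, 0; 0, V 1 0, 0, V 1 1]

lemma emb2_mul (V W : M2) : emb2 (V * W) = emb2 V * emb2 W := by
  ext i j
  fin_cases i <;> fin_cases j <;>
    simp [emb2, Matrix.mul_apply, Fin.sum_univ_four, Fin.sum_univ_two,
      Matrix.vecHead, Matrix.vecTail] <;> ring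

lemma emb2_mulVec (V : M2) (a b c d : ℤ) :
    (emb2 V).mulVec ![a,b,c,d] = ![a, V 0 0 * b + V 0 1 * d, c, V 1 0 * b + V 1 1 * d] := by
  funext i
  fin_cases i <;>
    simp [emb2, Matrix.mulVec, dotProduct, Fin.sum_univ_four,
      Matrix.vecHead, Matrix.vecTail] <;> ring

lemma mulVec2_apply (V : M2) (x y : ℤ) (i : Fin 2) :
    V.mulVec ![x,y] i = V i 0 * x + V i 1 * y := by
  simp [Matrix.mulVec, dotProduct, Fin.sum_univ_two, Matrix.vecHead, Matrix.vecTail]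

def Lm2 : M2 := !![1,0; 1,1]
def Lm2i : M2 := !![1,0; -1,1]
def Um2 : M2 := !![1,1; 0,1]
def Um2i : M2 := !![1,-1; 0,1]

def InS : Submonoid M2 := Submonoid.closure {Lm2, Lm2i, Um2, Um2i}

lemma InG_emb2 {V : M2} (h : V ∈ InS) : InG (emb2 V) := by
  induction h using Submonoid.closure_induction with
  | mem x hx =>
    rcases hx with h | h | h | h
    · rw [h, show emb2 Lm2 = C by decide]; exact InG_C
    · rw [h, show emb2 Lm2i = Ci by decide]; exact InG_Ci
    · rw [h, show emb2 Um2 = Di by decide]; exact InG_Di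
    · rw [h, show emb2 Um2i = D by decide]; exact InG_D
  | one => rw [show emb2 1 = 1 by decide]; exact InG_one
  | mul x y _ _ hx hy => rw [emb2_mul]; exact hx.mul hy

def Um2k (k : ℤ) : M2 := !![1,k; 0,1]
def Sm2 : M2 := !![0,-1; 1,0]
def Nm2 : M2 := !![-1,0; 0,-1]

lemma InS_Um2k (k : ℤ) : Um2k k ∈ InS := by
  have key : ∀ n : ℤ, Um2k n ∈ InS → (Um2k (n+1) ∈ InS ∧ Um2k (n-1) ∈ InS) := by
    intro n hn
    constructor
    · have : Um2k n * Um2 = Um2k (n+1) := by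
        ext i j; fin_cases i <;> fin_cases j <;>
          simp [Um2k, Um2, Matrix.mul_apply, Fin.sum_univ_two, Matrix.vecHead, Matrix.vecTail] <;> ring
      rw [← this]; exact mul_mem hn (Submonoid.subset_closure (by simp [Set.mem_insert_iff]))
    · have : Um2k n * Um2i = Um2k (n-1) := by
        ext i j; fin_cases i <;> fin_cases j <;>
          simp [Um2k, Um2i, Matrix.mul_apply, Fin.sum_univ_two, Matrix.vecHead, Matrix.vecTail] <;> ring
      rw [← this]; exact mul_mem hn (Submonoid.subset_closure (by simp [Set.mem_insert_iff]))
  induction k using Int.induction_on with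
  | zero => rw [show Um2k 0 = 1 by decide]; exact one_mem _
  | succ n ih => exact_mod_cast (key n (by exact_mod_cast ih)).1
  | pred n ih => exact_mod_cast (key (-n) (by exact_mod_cast ih)).2

lemma InS_Sm2 : Sm2 ∈ InS := by
  have : Um2i * Lm2 * Um2i = Sm2 := by decide
  rw [← this]
  exact mul_mem (mul_mem (Submonoid.subset_closure (by simp [Set.mem_insert_iff]))
    (Submonoid.subset_closure (by simp [Set.mem_insert_iff])))
    (Submonoid.subset_closure (by simp [Set.mem_insert_iff]))

lemma InS_Nm2 : Nm2 ∈ InS := by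
  have : Sm2 * Sm2 = Nm2 := by decide
  rw [← this]; exact mul_mem InS_Sm2 InS_Sm2

end actions

-- ==================== division helpers ====================

lemma mulVec_comp (X Y : M4) (v : Fin 4 → ℤ) :
    (X * Y).mulVec v = X.mulVec (Y.mulVec v) := (Matrix.mulVec_mulVec v X Y).symm

lemma mulVec_comp2 (X Y : M2) (v : Fin 2 → ℤ) :
    (X * Y).mulVec v = X.mulVec (Y.mulVec v) := (Matrix.mulVec_mulVec v X Y).symm

lemma Um2k_mulVec (k x y : ℤ) : (Um2k k).mulVec ![x,y] = ![x + k*y, y] := by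
  funext i
  fin_cases i <;>
    simp [Um2k, Matrix.mulVec, dotProduct, Fin.sum_univ_two, Matrix.vecHead, Matrix.vecTail] <;> ring

lemma Sm2_mulVec (x y : ℤ) : Sm2.mulVec ![x,y] = ![-y, x] := by
  funext i
  fin_cases i <;>
    simp [Sm2, Matrix.mulVec, dotProduct, Fin.sum_univ_two, Matrix.vecHead, Matrix.vecTail]

lemma Nm2_mulVec (x y : ℤ) : Nm2.mulVec ![x,y] = ![-x, -y] := by
  funext i
  fin_cases i <;>
    simp [Nm2, Matrix.mulVec, dotProduct, Fin.sum_univ_two, Matrix.vecHead, Matrix.vecTail]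

lemma exists_div (x y : ℤ) (hy : y ≠ 0) :
    ∃ k r : ℤ, x = k * y + r ∧ 0 ≤ r ∧ r.natAbs < y.natAbs := by
  set e : ℤ := (y.natAbs : ℤ) with he
  have he0 : e ≠ 0 := by simpa [he] using hy
  have hepos : 0 < e := by rw [he]; exact_mod_cast Int.natAbs_pos.mpr hy
  have hdiv : e * (x / e) + x % e = x := Int.mul_ediv_add_emod x e
  have hr0 : 0 ≤ x % e := Int.emod_nonneg x he0
  have hrlt : x % e < e := Int.emod_lt_of_pos x hepos
  rcases Int.natAbs_eq y with hy1 | hy1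
  · exact ⟨x / e, x % e, by rw [hy1, ← he]; linarith [hdiv], hr0, by omega⟩
  · exact ⟨-(x / e), x % e, by rw [hy1, ← he]; ring_nf; linarith [hdiv], hr0, by omega⟩

lemma exists_div2 (x y : ℤ) (hy : y ≠ 0) :
    ∃ k r : ℤ, x = 2 * k * y + r ∧ r.natAbs ≤ y.natAbs := by
  have h2y : (2 : ℤ) * y ≠ 0 := by omega
  obtain ⟨k, r, hx, hr0, hrlt⟩ := exists_div x (2 * y) h2y
  have hrlt' : r < 2 * (y.natAbs : ℤ) := by omega
  by_cases hcase : r ≤ (y.natAbs : ℤ)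
  · exact ⟨k, r, by linarith [hx], by omega⟩
  · rcases Int.natAbs_eq y with hy1 | hy1
    · refine ⟨k + 1, r - 2 * (y.natAbs : ℤ), by rw [← hy1]; linarith [hx], by omega⟩
    · refine ⟨k - 1, r - 2 * (y.natAbs : ℤ), ?_, by omega⟩
      have : (y.natAbs : ℤ) = -y := by omega
      rw [this]; linarith [hx]

-- ==================== Euclid: SL2 ====================

lemma sl2_reduce : ∀ (n : ℕ) (b d : ℤ), d.natAbs ≤ n →
    ∃ V ∈ InS, ∃ g : ℤ, V.mulVec ![b, d] = ![g, 0] := by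
  intro n
  induction n with
  | zero =>
    intro b d hd
    have : d = 0 := by omega
    subst this
    exact ⟨1, one_mem _, b, by rw [Matrix.one_mulVec]⟩
  | succ n ih =>
    intro b d hd
    by_cases hd0 : d = 0
    · subst hd0
      exact ⟨1, one_mem _, b, by rw [Matrix.one_mulVec]⟩
    · obtain ⟨k, r, hx, hr0, hrlt⟩ := exists_div b d hd0
      obtain ⟨V', hV', g, hg⟩ := ih (-d) r (by omega)
      refine ⟨V' * (Sm2 * Um2k (-k)), mul_mem hV' (mul_mem InS_Sm2 (InS_Um2k _)), g, ?_⟩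
      rw [mulVec_comp2, mulVec_comp2, Um2k_mulVec]
      have h1 : b + -k * d = r := by linear_combination hx
      rw [h1, Sm2_mulVec, hg]

-- ==================== Euclid: phase II (factor 1) ====================

lemma phase2 : ∀ (n : ℕ) (a b c d : ℤ), c.natAbs ≤ n → Odd a →
    ∃ w a', InG w ∧ Odd a' ∧ w.mulVec ![a,b,c,d] = ![a',b,0,d] := by
  intro n
  induction n with
  | zero =>
    intro a b c d hc ha
    have : c = 0 := by omega
    subst this
    exact ⟨1, a, InG_one, ha, by rw [Matrix.one_mulVec]⟩
  | succ n ih =>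
    intro a b c d hc ha
    by_cases hc0 : c = 0
    · subst hc0
      exact ⟨1, a, InG_one, ha, by rw [Matrix.one_mulVec]⟩
    · obtain ⟨k, a', hx, hle⟩ := exists_div2 a c hc0
      have ha' : Odd a' := by
        have h2 : Even (2 * k * c) := ⟨k * c, by ring⟩
        have : a' = a - 2 * k * c := by linarith [hx]
        rw [this]; exact ha.sub_even h2
      have e1 : a + 2 * -k * c = a' := by linear_combination hx
      have hstep : (Pk (-k)).mulVec ![a,b,c,d] = ![a',b,c,d] := by
        rw [Pk_mulVec, e1]
      by_cases heq : a'.natAbs = c.natAbs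
      · rcases Int.natAbs_eq_natAbs_iff.mp heq with h1 | h1
        · refine ⟨Ak (-1) * Pk (-k), a', (InG_Ak _).mul (InG_Pk _), ha', ?_⟩
          rw [mulVec_comp, hstep, Ak_mulVec, show c + (-1) * a' = 0 from by rw [h1]; ring]
        · refine ⟨Ak 1 * Pk (-k), a', (InG_Ak _).mul (InG_Pk _), ha', ?_⟩
          rw [mulVec_comp, hstep, Ak_mulVec, show c + 1 * a' = 0 from by rw [h1]; ring]
      · have ha'0 : a' ≠ 0 := by
          rintro rfl
          simpa [Int.odd_iff] using ha'
        obtain ⟨k2, r, hx2, hr0, hrlt⟩ := exists_div c a' ha'0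
        have e2 : c + -k2 * a' = r := by linear_combination hx2
        have hstep2 : (Ak (-k2)).mulVec ![a',b,c,d] = ![a',b,r,d] := by
          rw [Ak_mulVec, e2]
        obtain ⟨w', a'', hw', ha'', hw'act⟩ := ih a' b r d (by omega) ha'
        refine ⟨w' * (Ak (-k2) * Pk (-k)), a'', hw'.mul ((InG_Ak _).mul (InG_Pk _)), ha'', ?_⟩
        rw [mulVec_comp, mulVec_comp, hstep, hstep2, hw'act]

-- ==================== Euclid: phase III ====================

lemma phase3 : ∀ (n : ℕ) (a b : ℤ), a.natAbs + b.natAbs ≤ n → Odd a → Even b → IsCoprime a b →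
    ∃ w, InG w ∧ w.mulVec ![a,b,0,0] = ![1,0,0,0] := by
  intro n
  induction n with
  | zero =>
    intro a b ha0 ha _ _
    have : a = 0 := by omega
    subst this
    simp [Int.odd_iff] at ha
  | succ n ih =>
    intro a b hn ha hb hcop
    by_cases hb0 : b = 0
    · subst hb0
      have hu : IsUnit a := isCoprime_zero_right.mp hcop
      rcases Int.isUnit_iff.mp hu with h1 | h1 <;> subst h1
      · exact ⟨1, InG_one, by rw [Matrix.one_mulVec]⟩
      · exact ⟨Wneg, InG_Wneg, Wneg_mulVec⟩
    · have ha0 : a ≠ 0 := by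
        rintro rfl
        simpa [Int.odd_iff] using ha
      rcases lt_trichotomy a.natAbs b.natAbs with hlt | heq | hgt
      · -- |a| < |b| : reduce b via Lk
        obtain ⟨k, b', hx, hle⟩ := exists_div2 b a ha0
        have hb' : Even b' := by
          have h2 : Even (2 * k * a) := ⟨k * a, by ring⟩
          have : b' = b - 2 * k * a := by linarith [hx]
          rw [this]; exact hb.sub h2
        have hcop' : IsCoprime a b' := by
          obtain ⟨u, v, huv⟩ := hcop
          exact ⟨u + v * (2 * k), v, by linear_combination huv - v * hx⟩
        obtain ⟨w, hw, hwact⟩ := ih a b' (by omega) ha hb' hcop'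
        refine ⟨w * Lk (-k), hw.mul (InG_Lk _), ?_⟩
        rw [mulVec_comp, Lk_mulVec]
        have h1 : b + 2 * -k * a = b' := by linear_combination hx
        have h2 : (0 : ℤ) - 2 * -k * 0 = 0 := by ring
        rw [h1, h2, hwact]
      · -- impossible by parity
        exfalso
        have h1 : Odd a.natAbs := Int.natAbs_odd.mpr ha
        have h2 : Even b.natAbs := Int.natAbs_even.mpr hb
        rw [heq] at h1
        exact (Nat.not_odd_iff_even.mpr h2) h1
      · -- |b| < |a| : reduce a via Tk
        obtain ⟨k, a', hx, hle⟩ := exists_div2 a b hb0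
        have ha' : Odd a' := by
          have h2 : Even (2 * k * b) := ⟨k * b, by ring⟩
          have : a' = a - 2 * k * b := by linarith [hx]
          rw [this]; exact ha.sub_even h2
        have hcop' : IsCoprime a' b := by
          obtain ⟨u, v, huv⟩ := hcop
          exact ⟨u, v + u * (2 * k), by linear_combination huv - u * hx⟩
        obtain ⟨w, hw, hwact⟩ := ih a' b (by omega) ha' hb hcop'
        refine ⟨w * Tk (-k), hw.mul (InG_Tk _), ?_⟩
        rw [mulVec_comp, Tk_mulVec]
        have h1 : a + 2 * -k * b = a' := by linear_combination hx
        have h2 : (0 : ℤ) - 2 * -k * 0 = 0 := by ring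
        rw [h1, h2, hwact]

-- ==================== stage 2 ====================

lemma vecfix (x y z t x' y' z' t' : ℤ) (h0 : x = x') (h1 : y = y') (h2 : z = z') (h3 : t = t') :
    (![x,y,z,t] : Fin 4 → ℤ) = ![x',y',z',t'] := by
  subst h0 h1 h2 h3; rfl

lemma emb2_fix (V : M2) (x z : ℤ) : (emb2 V).mulVec ![x,0,z,0] = ![x,0,z,0] := by
  rw [emb2_mulVec]
  exact vecfix _ _ _ _ _ _ _ _ rfl (by ring) rfl (by ring)

lemma stage2 (p q s : ℤ) : ∃ w p', InG w ∧ (p' = 0 ∨ p' = 1) ∧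
    w.mulVec ![1,0,0,0] = ![1,0,0,0] ∧ w.mulVec ![p,q,1,s] = ![p',0,1,0] := by
  obtain ⟨V, hV, g, hg⟩ := sl2_reduce s.natAbs q s le_rfl
  have hg0 : V 0 0 * q + V 0 1 * s = g := by
    have := congrFun hg 0
    rwa [mulVec2_apply] at this
  have hg1 : V 1 0 * q + V 1 1 * s = 0 := by
    have := congrFun hg 1
    rwa [mulVec2_apply] at this
  have act1 : (emb2 V).mulVec ![p,q,1,s] = ![p,g,1,0] := by
    rw [emb2_mulVec, hg0, hg1]
  have actR : ∀ k x y : ℤ, (Rk k).mulVec ![x,y,1,0] = ![x, y + 2*k, 1, 0] := by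
    intro k x y
    rw [Rk_mulVec]
    exact vecfix _ _ _ _ _ _ _ _ (by ring) (by ring) rfl rfl
  have actP : ∀ k x : ℤ, (Pk k).mulVec ![x,0,1,0] = ![x + 2*k, 0, 1, 0] := by
    intro k x
    rw [Pk_mulVec]
    exact vecfix _ _ _ _ _ _ _ _ (by ring) rfl rfl rfl
  have hfixR : ∀ k : ℤ, (Rk k).mulVec ![1,0,0,0] = ![1,0,0,0] := by
    intro k
    rw [Rk_mulVec]
    exact vecfix _ _ _ _ _ _ _ _ (by ring) (by ring) rfl rfl
  have hfixP : ∀ k : ℤ, (Pk k).mulVec ![1,0,0,0] = ![1,0,0,0] := by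
    intro k
    rw [Pk_mulVec]
    exact vecfix _ _ _ _ _ _ _ _ (by ring) rfl rfl rfl
  have hfixB : B.mulVec ![1,0,0,0] = ![1,0,0,0] := by
    rw [B_mulVec]
    exact vecfix _ _ _ _ _ _ _ _ (by ring) (by ring) rfl rfl
  have hmod2 : ∀ x : ℤ, x + 2 * -(x/2) = x % 2 := by
    intro x
    rw [Int.emod_def]
    ring
  rcases Int.emod_two_eq_zero_or_one g with hε | hε
  · -- g even
    refine ⟨Pk (-(p/2)) * (Rk (-(g/2)) * emb2 V), p % 2, ((InG_Pk _).mul ((InG_Rk _).mul (InG_emb2 hV))),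
      Int.emod_two_eq_zero_or_one p, ?_, ?_⟩
    · rw [mulVec_comp, mulVec_comp, emb2_fix, hfixR, hfixP]
    · rw [mulVec_comp, mulVec_comp, act1, actR, hmod2, hε, actP, hmod2]
  · -- g odd
    refine ⟨Pk (-((p-1)/2)) * (Rk (-1) * (B * (Rk (-(g/2)) * emb2 V))), (p-1) % 2,
      ((InG_Pk _).mul ((InG_Rk _).mul (InG_B.mul ((InG_Rk _).mul (InG_emb2 hV))))),
      Int.emod_two_eq_zero_or_one _, ?_, ?_⟩
    · rw [mulVec_comp, mulVec_comp, mulVec_comp, mulVec_comp, emb2_fix, hfixR, hfixB, hfixR, hfixP]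
    · have eB : B.mulVec ![p,1,1,0] = ![p-1, 2, 1, 0] := by
        rw [B_mulVec]
        exact vecfix _ _ _ _ _ _ _ _ (by ring) (by ring) rfl rfl
      have eR1 : (Rk (-1)).mulVec ![p-1, 2, 1, 0] = ![p-1, 0, 1, 0] := by
        rw [actR]
        exact vecfix _ _ _ _ _ _ _ _ rfl (by ring) rfl rfl
      rw [mulVec_comp, mulVec_comp, mulVec_comp, mulVec_comp, act1, actR, hmod2, hε, eB, eR1,
        actP, hmod2]

-- ==================== the quadratic invariant ====================

def Qf (v : Fin 4 → ZMod 2) : ZMod 2 := v 0 * v 2 + v 1 * v 3 + v 1 + v 2 + v 3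

def PresQ (m : M4) : Prop :=
  ∀ v : Fin 4 → ZMod 2, Qf ((m.map (Int.cast : ℤ → ZMod 2)).mulVec v) = Qf v

lemma map_mul4 (X Y : M4) :
    (X * Y).map (Int.cast : ℤ → ZMod 2) = X.map (Int.cast : ℤ → ZMod 2) * Y.map (Int.cast : ℤ → ZMod 2) := by
  ext i j
  simp [Matrix.map_apply, Matrix.mul_apply]

lemma PresQ.mul {x y : M4} (hx : PresQ x) (hy : PresQ y) : PresQ (x * y) := by
  intro v
  rw [map_mul4, ← Matrix.mulVec_mulVec, hx, hy]

lemma PresQ.of_mul_eq_one {x y : M4} (hx : PresQ x) (h : x * y = 1) : PresQ y := by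
  intro v
  have h1 : x.map (Int.cast : ℤ → ZMod 2) * y.map (Int.cast : ℤ → ZMod 2) = 1 := by
    rw [← map_mul4, h]
    ext i j
    simp [Matrix.map_apply, Matrix.one_apply, apply_ite (Int.cast : ℤ → ZMod 2)]
  have h2 := mul_eq_one_comm.mp h1
  have h3 := hx ((y.map (Int.cast : ℤ → ZMod 2)).mulVec v)
  rw [Matrix.mulVec_mulVec, h1, Matrix.one_mulVec] at h3
  exact h3.symm

lemma presQ_A : PresQ A := by delta PresQ; decide
lemma presQ_B : PresQ B := by delta PresQ; decide
lemma presQ_C : PresQ C := by delta PresQ; decide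
lemma presQ_D : PresQ D := by delta PresQ; decide

lemma InG_presQ {m : M4} (h : InG m) : PresQ m := by
  obtain ⟨γ, hγΓ, hγ⟩ := h
  have hm : m = s (γ : Matrix (Fin 2 ⊕ Fin 2) (Fin 2 ⊕ Fin 2) ℤ) := by
    rw [hγ, s_r]
  rw [hm]
  clear hγ hm
  induction hγΓ using Subgroup.closure_induction with
  | mem x hx =>
    rcases hx with h | h | h | h <;> rw [h, s_r]
    · exact presQ_A
    · exact presQ_B
    · exact presQ_C
    · exact presQ_D
  | one =>
    have : s ((1 : Matrix.symplecticGroup (Fin 2) ℤ) : Matrix (Fin 2 ⊕ Fin 2) (Fin 2 ⊕ Fin 2) ℤ) = 1 := by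
      apply r_inj
      rw [r_s, r_one]
      rfl
    rw [this]
    intro v
    have : (1 : M4).map (Int.cast : ℤ → ZMod 2) = 1 := by
      ext i j
      simp [Matrix.map_apply, Matrix.one_apply, apply_ite (Int.cast : ℤ → ZMod 2)]
    rw [this, Matrix.one_mulVec]
  | mul x y hxm hym hx hy =>
    have : s ((↑(x * y) : Matrix (Fin 2 ⊕ Fin 2) (Fin 2 ⊕ Fin 2) ℤ)) =
        s (x : Matrix (Fin 2 ⊕ Fin 2) (Fin 2 ⊕ Fin 2) ℤ) * s (y : Matrix (Fin 2 ⊕ Fin 2) (Fin 2 ⊕ Fin 2) ℤ) := by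
      rw [← s_mul]
      rfl
    rw [this]
    exact hx.mul hy
  | inv x hxm hx =>
    apply hx.of_mul_eq_one
    rw [← s_mul, show ((x : Matrix (Fin 2 ⊕ Fin 2) (Fin 2 ⊕ Fin 2) ℤ) *
      (↑(x⁻¹) : Matrix (Fin 2 ⊕ Fin 2) (Fin 2 ⊕ Fin 2) ℤ)) = 1 from coe_mul_inv x]
    apply r_inj
    rw [r_s, r_one]

-- ==================== final helpers ====================

section final
set_option maxHeartbeats 4000000

lemma omega_rel {x : M4} (hx : xᵀ * J4 * x = J4) (i j : Fin 4) :
    x 2 i * x 0 j + x 3 i * x 1 j - x 0 i * x 2 j - x 1 i * x 3 j = J4 i j := by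
  have h := congrFun (congrFun hx i) j
  simp [Matrix.mul_apply, Matrix.transpose_apply, J4, Fin.sum_univ_four,
    Matrix.vecHead, Matrix.vecTail] at h
  simp [J4]
  linarith [h]

lemma spG_two_sided {m : M4} (h : r m ∈ Matrix.symplecticGroup (Fin 2) ℤ) :
    ∃ mi : M4, mi * m = 1 ∧ m * mi = 1 := by
  set γ : Matrix.symplecticGroup (Fin 2) ℤ := ⟨r m, h⟩ with hγdef
  set δ : Matrix (Fin 2 ⊕ Fin 2) (Fin 2 ⊕ Fin 2) ℤ :=
    ((γ⁻¹ : Matrix.symplecticGroup (Fin 2) ℤ) : Matrix (Fin 2 ⊕ Fin 2) (Fin 2 ⊕ Fin 2) ℤ) with hδ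
  have hcoe : (γ : Matrix (Fin 2 ⊕ Fin 2) (Fin 2 ⊕ Fin 2) ℤ) = r m := rfl
  refine ⟨s δ, ?_, ?_⟩
  · apply r_inj
    rw [r_mul, r_s, r_one, ← hcoe, hδ, coe_inv_mul]
  · apply r_inj
    rw [r_mul, r_s, r_one, ← hcoe, hδ, coe_mul_inv]

lemma mul_col (X Y : M4) (i j : Fin 4) : (X * Y) i j = X.mulVec (fun k => Y k j) i := by
  simp [Matrix.mul_apply, Matrix.mulVec, dotProduct]

lemma even_of_cast {x : ℤ} (h : (x : ZMod 2) = 0) : Even x := by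
  have h2 : ((2 : ℕ) : ℤ) ∣ x := (ZMod.intCast_zmod_eq_zero_iff_dvd x 2).mp h
  obtain ⟨k, hk⟩ := h2
  exact ⟨k, by push_cast at hk; omega⟩

lemma odd_of_cast {x : ℤ} (h : (x : ZMod 2) = 1) : Odd x := by
  have h1 : ((x - 1 : ℤ) : ZMod 2) = 0 := by
    push_cast
    rw [h]
    ring
  have h2 : ((2 : ℕ) : ℤ) ∣ x - 1 := (ZMod.intCast_zmod_eq_zero_iff_dvd (x - 1) 2).mp h1
  obtain ⟨k, hk⟩ := h2
  exact ⟨k, by push_cast at hk; omega⟩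

end final

/-- The entrywise reduction homomorphism `Sp(4,ℤ) → Sp(4,ℤ/2ℤ)`. -/
def sred : Matrix.symplecticGroup (Fin 2) ℤ →* Matrix.symplecticGroup (Fin 2) (ZMod 2) where
  toFun g := ⟨(Int.castRingHom (ZMod 2)).mapMatrix
      (g : Matrix (Fin 2 ⊕ Fin 2) (Fin 2 ⊕ Fin 2) ℤ), by
    rw [SymplecticGroup.mem_iff]
    have hg := SymplecticGroup.mem_iff.mp g.2
    have hneg : ((-1 : Matrix (Fin 2) (Fin 2) ℤ).map fun x => ((x : ZMod 2))) = -1 := by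
      ext i j
      simp [Matrix.map_apply, Matrix.one_apply, apply_ite (Int.cast : ℤ → ZMod 2)]
    have hJ : (Int.castRingHom (ZMod 2)).mapMatrix (Matrix.J (Fin 2) ℤ) =
        Matrix.J (Fin 2) (ZMod 2) := by
      rw [RingHom.mapMatrix_apply]
      unfold Matrix.J
      rw [Matrix.fromBlocks_map]
      simp [hneg]
    rw [← hJ, RingHom.mapMatrix_apply, RingHom.mapMatrix_apply, ← Matrix.transpose_map,
      ← Matrix.map_mul, ← Matrix.map_mul, hg]⟩
  map_one' := by
    apply Subtype.ext
    simp
  map_mul' g h := by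
    apply Subtype.ext
    show ((g : Matrix (Fin 2 ⊕ Fin 2) (Fin 2 ⊕ Fin 2) ℤ) *
        (h : Matrix (Fin 2 ⊕ Fin 2) (Fin 2 ⊕ Fin 2) ℤ)).map (Int.castRingHom (ZMod 2)) = _
    rw [Matrix.map_mul]
    rfl

/-- The principal congruence subgroup `Γ(2)`: the kernel of the entrywise reduction
homomorphism `Sp(4,ℤ) → Sp(4,ℤ/2ℤ)`. -/
def Γ₂ : Subgroup (Matrix.symplecticGroup (Fin 2) ℤ) := sred.ker


-- ==================== main theorem ====================

section main
set_option maxHeartbeats 8000000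

/-- The principal congruence subgroup `Γ(2)` of level `2` is contained in the subgroup `Γ`
of `Sp(4,ℤ)` generated by the four matrices `A`, `B`, `C`, `D`. -/
theorem gamma2_le_gamma : Γ₂ ≤ Γ := by
  intro M hM
  -- set up the Fin 4 avatar of M
  set m : M4 := s (M : Matrix (Fin 2 ⊕ Fin 2) (Fin 2 ⊕ Fin 2) ℤ) with hmdef
  have hrm : r m = (M : Matrix (Fin 2 ⊕ Fin 2) (Fin 2 ⊕ Fin 2) ℤ) := r_s _
  have hmsp : r m ∈ Matrix.symplecticGroup (Fin 2) ℤ := by rw [hrm]; exact M.2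
  -- mod 2 triviality
  have hker : sred M = 1 := hM
  have hval : ((M : Matrix (Fin 2 ⊕ Fin 2) (Fin 2 ⊕ Fin 2) ℤ).map (Int.cast : ℤ → ZMod 2)) = 1 := by
    have := congrArg Subtype.val hker
    exact this
  have hmap : m.map (Int.cast : ℤ → ZMod 2) = 1 := by
    have h1 : m.map (Int.cast : ℤ → ZMod 2) =
        ((M : Matrix (Fin 2 ⊕ Fin 2) (Fin 2 ⊕ Fin 2) ℤ).map (Int.cast : ℤ → ZMod 2)).submatrix
          (finSumFinEquiv (m := 2) (n := 2)).symm (finSumFinEquiv (m := 2) (n := 2)).symm := rfl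
    rw [h1, hval, Matrix.submatrix_one_equiv]
  have hcast : ∀ i j : Fin 4, ((m i j : ℤ) : ZMod 2) = if i = j then 1 else 0 := by
    intro i j
    have := congrFun (congrFun hmap i) j
    simpa [Matrix.map_apply, Matrix.one_apply] using this
  have hodd : Odd (m 0 0) := odd_of_cast (by simpa using hcast 0 0)
  have hev10 : Even (m 1 0) := even_of_cast (by simpa using hcast 1 0)
  have hev30 : Even (m 3 0) := even_of_cast (by simpa using hcast 3 0)
  -- ============ stage 1 : first column to e1 ============
  obtain ⟨V1, hV1, g, hgact⟩ := sl2_reduce (m 3 0).natAbs (m 1 0) (m 3 0) le_rfl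
  have hg0 : V1 0 0 * m 1 0 + V1 0 1 * m 3 0 = g := by
    have := congrFun hgact 0
    rwa [mulVec2_apply] at this
  have hg1 : V1 1 0 * m 1 0 + V1 1 1 * m 3 0 = 0 := by
    have := congrFun hgact 1
    rwa [mulVec2_apply] at this
  have act1 : (emb2 V1).mulVec ![m 0 0, m 1 0, m 2 0, m 3 0] = ![m 0 0, g, m 2 0, 0] := by
    rw [emb2_mulVec, hg0, hg1]
  have hgeven : Even g := by
    rw [← hg0]
    exact (hev10.mul_left _).add (hev30.mul_left _)
  obtain ⟨w2, a', hw2, ha', act2⟩ := phase2 (m 2 0).natAbs (m 0 0) g (m 2 0) 0 le_rfl hodd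
  have hwp : InG (w2 * emb2 V1) := hw2.mul (InG_emb2 hV1)
  obtain ⟨wpi, hwpiG, hLi, hRi⟩ := hwp.two_sided
  have hv0 : (w2 * emb2 V1).mulVec ![m 0 0, m 1 0, m 2 0, m 3 0] = ![a', g, 0, 0] := by
    rw [mulVec_comp, act1, act2]
  have hback : ∀ i, (![m 0 0, m 1 0, m 2 0, m 3 0] : Fin 4 → ℤ) i =
      wpi i 0 * a' + wpi i 1 * g + wpi i 2 * 0 + wpi i 3 * 0 := by
    intro i
    have h1 : wpi.mulVec ((w2 * emb2 V1).mulVec ![m 0 0, m 1 0, m 2 0, m 3 0]) =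
        ![m 0 0, m 1 0, m 2 0, m 3 0] := by
      rw [Matrix.mulVec_mulVec, hLi, Matrix.one_mulVec]
    rw [hv0] at h1
    rw [← h1, mulVec4_apply]
  have e0 : m 0 0 = wpi 0 0 * a' + wpi 0 1 * g + wpi 0 2 * 0 + wpi 0 3 * 0 := by
    simpa using hback 0
  have e1 : m 1 0 = wpi 1 0 * a' + wpi 1 1 * g + wpi 1 2 * 0 + wpi 1 3 * 0 := by
    simpa using hback 1
  have e2 : m 2 0 = wpi 2 0 * a' + wpi 2 1 * g + wpi 2 2 * 0 + wpi 2 3 * 0 := by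
    simpa using hback 2
  have e3 : m 3 0 = wpi 3 0 * a' + wpi 3 1 * g + wpi 3 2 * 0 + wpi 3 3 * 0 := by
    simpa using hback 3
  obtain ⟨minv, hmL, hmR⟩ := spG_two_sided hmsp
  have hprim : minv 0 0 * m 0 0 + minv 0 1 * m 1 0 + minv 0 2 * m 2 0 + minv 0 3 * m 3 0 = 1 := by
    have := congrFun (congrFun hmL 0) 0
    simpa [Matrix.mul_apply, Fin.sum_univ_four, Matrix.one_apply] using this
  have hcop : IsCoprime a' g := by
    refine ⟨minv 0 0 * wpi 0 0 + minv 0 1 * wpi 1 0 + minv 0 2 * wpi 2 0 + minv 0 3 * wpi 3 0,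
      minv 0 0 * wpi 0 1 + minv 0 1 * wpi 1 1 + minv 0 2 * wpi 2 1 + minv 0 3 * wpi 3 1, ?_⟩
    linear_combination hprim - minv 0 0 * e0 - minv 0 1 * e1 - minv 0 2 * e2 - minv 0 3 * e3
  obtain ⟨w3, hw3, act3⟩ := phase3 (a'.natAbs + g.natAbs) a' g le_rfl ha' hgeven hcop
  have hW1 : InG (w3 * (w2 * emb2 V1)) := hw3.mul hwp
  have hW1act : (w3 * (w2 * emb2 V1)).mulVec ![m 0 0, m 1 0, m 2 0, m 3 0] = ![1,0,0,0] := by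
    rw [mulVec_comp, hv0, act3]
  set m1 : M4 := (w3 * (w2 * emb2 V1)) * m with hm1def
  have hm1sp : r m1 ∈ Matrix.symplecticGroup (Fin 2) ℤ := by
    rw [hm1def, r_mul]
    exact mul_mem hW1.spG hmsp
  have hm1col0 : ∀ i, m1 i 0 = (![1,0,0,0] : Fin 4 → ℤ) i := by
    intro i
    rw [hm1def, mul_col, show (fun k => m k 0) = ![m 0 0, m 1 0, m 2 0, m 3 0] from vec4_eta _,
      hW1act]
  have c00 : m1 0 0 = 1 := by simpa using hm1col0 0
  have c10 : m1 1 0 = 0 := by simpa using hm1col0 1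
  have c20 : m1 2 0 = 0 := by simpa using hm1col0 2
  have c30 : m1 3 0 = 0 := by simpa using hm1col0 3
  -- ============ stage 2 : third column ============
  have hT1 := colrel_of_mem_spG hm1sp
  have r02 := omega_rel hT1 0 2
  rw [c00, c10, c20, c30] at r02
  have hJ02 : J4 0 2 = -1 := by decide
  rw [hJ02] at r02
  have hm1_22 : m1 2 2 = 1 := by linarith
  obtain ⟨w4, p', hw4, hp', hfix4, hact4⟩ := stage2 (m1 0 2) (m1 1 2) (m1 3 2)
  have hcol2eta : (fun k => m1 k 2) = ![m1 0 2, m1 1 2, 1, m1 3 2] := by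
    rw [show (fun k => m1 k 2) = ![m1 0 2, m1 1 2, m1 2 2, m1 3 2] from vec4_eta _, hm1_22]
  set m2 : M4 := w4 * m1 with hm2def
  have hm2sp : r m2 ∈ Matrix.symplecticGroup (Fin 2) ℤ := by
    rw [hm2def, r_mul]
    exact mul_mem hw4.spG hm1sp
  have hm2col0 : ∀ i, m2 i 0 = (![1,0,0,0] : Fin 4 → ℤ) i := by
    intro i
    rw [hm2def, mul_col, show (fun k => m1 k 0) = ![1,0,0,0] from funext hm1col0, hfix4]
  have hm2col2 : ∀ i, m2 i 2 = (![p',0,1,0] : Fin 4 → ℤ) i := by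
    intro i
    rw [hm2def, mul_col, hcol2eta, hact4]
  have d00 : m2 0 0 = 1 := by simpa using hm2col0 0
  have d10 : m2 1 0 = 0 := by simpa using hm2col0 1
  have d20 : m2 2 0 = 0 := by simpa using hm2col0 2
  have d30 : m2 3 0 = 0 := by simpa using hm2col0 3
  have f02 : m2 0 2 = p' := by simpa using hm2col2 0
  have f12 : m2 1 2 = 0 := by simpa using hm2col2 1
  have f22 : m2 2 2 = 1 := by simpa using hm2col2 2
  have f32 : m2 3 2 = 0 := by simpa using hm2col2 3
  -- ============ stage 3 : columns 2 and 4 ============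
  have hT2 := colrel_of_mem_spG hm2sp
  have hJ01 : J4 0 1 = 0 := by decide
  have hJ21 : J4 2 1 = 0 := by decide
  have hJ03 : J4 0 3 = 0 := by decide
  have hJ23 : J4 2 3 = 0 := by decide
  have r01 := omega_rel hT2 0 1
  rw [d00, d10, d20, d30, hJ01] at r01
  have h21 : m2 2 1 = 0 := by linarith
  have r21 := omega_rel hT2 2 1
  rw [f02, f12, f22, f32, h21, hJ21] at r21
  have h01 : m2 0 1 = 0 := by linarith
  have r03 := omega_rel hT2 0 3
  rw [d00, d10, d20, d30, hJ03] at r03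
  have h23 : m2 2 3 = 0 := by linarith
  have r23 := omega_rel hT2 2 3
  rw [f02, f12, f22, f32, h23, hJ23] at r23
  have h03 : m2 0 3 = 0 := by linarith
  obtain ⟨V5, hV5, g5, hg5⟩ := sl2_reduce (m2 3 1).natAbs (m2 1 1) (m2 3 1) le_rfl
  have f0 : V5 0 0 * m2 1 1 + V5 0 1 * m2 3 1 = g5 := by
    have := congrFun hg5 0
    rwa [mulVec2_apply] at this
  have f1 : V5 1 0 * m2 1 1 + V5 1 1 * m2 3 1 = 0 := by
    have := congrFun hg5 1
    rwa [mulVec2_apply] at this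
  set m3 : M4 := emb2 V5 * m2 with hm3def
  have hm3sp : r m3 ∈ Matrix.symplecticGroup (Fin 2) ℤ := by
    rw [hm3def, r_mul]
    exact mul_mem (InG_emb2 hV5).spG hm2sp
  have hm3col0 : ∀ i, m3 i 0 = (![1,0,0,0] : Fin 4 → ℤ) i := by
    intro i
    rw [hm3def, mul_col, show (fun k => m2 k 0) = ![1,0,0,0] from funext hm2col0,
      show ((![1,0,0,0] : Fin 4 → ℤ)) = ![1,0,0,0] from rfl, emb2_fix]
  have hm3col2 : ∀ i, m3 i 2 = (![p',0,1,0] : Fin 4 → ℤ) i := by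
    intro i
    rw [hm3def, mul_col, show (fun k => m2 k 2) = ![p',0,1,0] from funext hm2col2, emb2_fix]
  have hm3col1 : ∀ i, m3 i 1 = (![0,g5,0,0] : Fin 4 → ℤ) i := by
    intro i
    rw [hm3def, mul_col,
      show (fun k => m2 k 1) = ![0, m2 1 1, 0, m2 3 1] from by
        rw [show (fun k => m2 k 1) = ![m2 0 1, m2 1 1, m2 2 1, m2 3 1] from vec4_eta _, h01, h21],
      emb2_mulVec, f0, f1]
  have hm2col3eta : (fun k => m2 k 3) = ![0, m2 1 3, 0, m2 3 3] := by
    rw [show (fun k => m2 k 3) = ![m2 0 3, m2 1 3, m2 2 3, m2 3 3] from vec4_eta _, h03, h23]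
  have hm3col3v : ∀ i, m3 i 3 =
      (![0, V5 0 0 * m2 1 3 + V5 0 1 * m2 3 3, 0, V5 1 0 * m2 1 3 + V5 1 1 * m2 3 3] : Fin 4 → ℤ) i := by
    intro i
    rw [hm3def, mul_col, hm2col3eta, emb2_mulVec]
  have g01 : m3 0 1 = 0 := by simpa using hm3col1 0
  have g11 : m3 1 1 = g5 := by simpa using hm3col1 1
  have g21 : m3 2 1 = 0 := by simpa using hm3col1 2
  have g31 : m3 3 1 = 0 := by simpa using hm3col1 3
  have g03 : m3 0 3 = 0 := by simpa using hm3col3v 0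
  have g23 : m3 2 3 = 0 := by simpa using hm3col3v 2
  have hcol3eta : (fun k => m3 k 3) = ![0, m3 1 3, 0, m3 3 3] := by
    rw [show (fun k => m3 k 3) = ![m3 0 3, m3 1 3, m3 2 3, m3 3 3] from vec4_eta _, g03, g23]
  have hT3 := colrel_of_mem_spG hm3sp
  have hJ13 : J4 1 3 = -1 := by decide
  have r13 := omega_rel hT3 1 3
  rw [g01, g11, g21, g31, g03, g23, hJ13] at r13
  have hgd : g5 * m3 3 3 = 1 := by linarith
  -- unify the two sign cases
  have key : ∃ w6 b6, InG w6 ∧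
      (∀ i, (w6 * m3) i 0 = (![1,0,0,0] : Fin 4 → ℤ) i) ∧
      (∀ i, (w6 * m3) i 1 = (![0,1,0,0] : Fin 4 → ℤ) i) ∧
      (∀ i, (w6 * m3) i 2 = (![p',0,1,0] : Fin 4 → ℤ) i) ∧
      (∀ i, (w6 * m3) i 3 = (![0,b6,0,1] : Fin 4 → ℤ) i) := by
    rcases Int.mul_eq_one_iff_eq_one_or_neg_one.mp hgd with ⟨hg5e, hd5e⟩ | ⟨hg5e, hd5e⟩
    · refine ⟨1, m3 1 3, InG_one, ?_, ?_, ?_, ?_⟩ <;> intro i <;> rw [one_mul]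
      · exact hm3col0 i
      · fin_cases i
        · simpa using g01
        · simpa [hg5e] using g11
        · simpa using g21
        · simpa using g31
      · exact hm3col2 i
      · fin_cases i
        · simpa using g03
        · simp
        · simpa using g23
        · simpa using hd5e
    · refine ⟨emb2 Nm2, -(m3 1 3), InG_emb2 InS_Nm2, ?_, ?_, ?_, ?_⟩ <;> intro i <;>
        rw [mul_col]
      · rw [show (fun k => m3 k 0) = ![1,0,0,0] from funext hm3col0, emb2_fix]
      · rw [show (fun k => m3 k 1) = ![0,g5,0,0] from funext hm3col1, emb2_mulVec]
        exact congrFun (vecfix _ _ _ _ _ _ _ _ rfl (by simp [Nm2, hg5e]) rfl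
          (by simp [Nm2, hg5e])) i
      · rw [show (fun k => m3 k 2) = ![p',0,1,0] from funext hm3col2, emb2_fix]
      · rw [hcol3eta, emb2_mulVec]
        refine congrFun (vecfix _ _ _ _ _ _ _ _ rfl ?_ rfl ?_) i
        · simp [Nm2]
        · simp [Nm2, hd5e]
  obtain ⟨w6, b6, hw6, k0, k1, k2, k3⟩ := key
  -- kill the last off-diagonal entry
  have act7 : ∀ i, (Dk (-b6) * (w6 * m3)) i 3 = (![0,0,0,1] : Fin 4 → ℤ) i := by
    intro i
    rw [mul_col, show (fun k => (w6 * m3) k 3) = ![0,b6,0,1] from funext k3, Dk_mulVec]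
    rw [show b6 + -b6 * (1:ℤ) = 0 from by ring]
  have act70 : ∀ i, (Dk (-b6) * (w6 * m3)) i 0 = (![1,0,0,0] : Fin 4 → ℤ) i := by
    intro i
    rw [mul_col, show (fun k => (w6 * m3) k 0) = ![1,0,0,0] from funext k0, Dk_mulVec]
    rw [show (0:ℤ) + -b6 * 0 = 0 from by ring]
  have act71 : ∀ i, (Dk (-b6) * (w6 * m3)) i 1 = (![0,1,0,0] : Fin 4 → ℤ) i := by
    intro i
    rw [mul_col, show (fun k => (w6 * m3) k 1) = ![0,1,0,0] from funext k1, Dk_mulVec]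
    rw [show (1:ℤ) + -b6 * 0 = 1 from by ring]
  have act72 : ∀ i, (Dk (-b6) * (w6 * m3)) i 2 = (![p',0,1,0] : Fin 4 → ℤ) i := by
    intro i
    rw [mul_col, show (fun k => (w6 * m3) k 2) = ![p',0,1,0] from funext k2, Dk_mulVec]
    rw [show (0:ℤ) + -b6 * 0 = 0 from by ring]
  have hm5 : Dk (-b6) * (w6 * m3) = !![1,0,p',0; 0,1,0,0; 0,0,1,0; 0,0,0,1] := by
    ext i j
    fin_cases j
    · exact (act70 i).trans (by fin_cases i <;> rfl)
    · exact (act71 i).trans (by fin_cases i <;> rfl)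
    · exact (act72 i).trans (by fin_cases i <;> rfl)
    · exact (act7 i).trans (by fin_cases i <;> rfl)
  -- assemble the total word
  set W : M4 := Dk (-b6) * (w6 * (emb2 V5 * (w4 * (w3 * (w2 * emb2 V1))))) with hWdef
  have hWG : InG W :=
    (InG_Dk _).mul (hw6.mul ((InG_emb2 hV5).mul (hw4.mul hW1)))
  have hWm : W * m = !![1,0,p',0; 0,1,0,0; 0,0,1,0; 0,0,0,1] := by
    rw [← hm5, hm3def, hm2def, hm1def, hWdef]
    noncomm_ring
  -- the quadratic-invariant argument kills p' = 1
  have hpres : PresQ W := InG_presQ hWG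
  have hmapR : (!![1,0,p',0; 0,1,0,0; 0,0,1,0; 0,0,0,1] : M4).map (Int.cast : ℤ → ZMod 2) =
      W.map (Int.cast : ℤ → ZMod 2) := by
    rw [← hWm, map_mul4, hmap, mul_one]
  have hp0 : p' = 0 := by
    rcases hp' with h | h
    · exact h
    · exfalso
      subst h
      have hq := hpres ![0,0,1,0]
      rw [← hmapR] at hq
      revert hq
      decide
  subst hp0
  have h1 : (!![1,0,(0:ℤ),0; 0,1,0,0; 0,0,1,0; 0,0,0,1] : M4) = 1 := by decide
  have hWm1 : W * m = 1 := by rw [hWm, h1]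
  have hmG : InG m := hWG.inv_pair hWm1
  obtain ⟨γ', hγ'Γ, hγ'c⟩ := hmG
  have hfin : γ' = M := by
    apply Subtype.ext
    rw [hγ'c, hrm]
  rwa [← hfin]

end main

end GenusTwo

-- final sanity check
-- #print axioms GenusTwo.gamma2_le_gamma
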